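/- Weak duality for the commutative weighted problem: let A = A₀ + A₁x₁ + ⋯ + A_m x_m be an n×n matrix with each A_i ∈ K(t)^{n×n}, viewed over K(x₁,…,x_m)(t) with commuting variables. If P, Q ∈ GL_n(K(t)) satisfy that P A_i Q is proper (all entries in K(t)⁻) for every i = 0,…,m, then deg det A ≤ −deg det P − deg det Q. -/

import Mathlib

/-- The degree of a rational function, with `deg 0 = ⊥` (i.e. `-∞`). -/
noncomputable def degBot {K : Type*} [Field K] (f : RatFunc K) : WithBot ℤ := by
  classical exact if f = 0 then ⊥ else (f.intDegree : WithBot ℤ)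

/-- The Gauss extension of `deg` to polynomials in the commuting variables `x₁,…,x_m`
over `K(t)`: the maximum of the degrees of the `K(t)`-coefficients. -/
noncomputable def degGauss {K : Type*} [Field K] {m : ℕ}
    (p : MvPolynomial (Fin m) (RatFunc K)) : WithBot ℤ :=
  p.support.sup fun α => degBot (MvPolynomial.coeff α p)

section Aux

variable {K : Type*} [Field K] {m : ℕ}

lemma degBot_zero : degBot (0 : RatFunc K) = ⊥ := if_pos rfl

lemma degBot_one : degBot (1 : RatFunc K) = 0 := by
  unfold degBot
  rw [if_neg one_ne_zero, RatFunc.intDegree_one]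
  rfl

lemma degBot_mul (a b : RatFunc K) : degBot (a * b) = degBot a + degBot b := by
  unfold degBot
  by_cases ha : a = 0
  · simp [ha]
  by_cases hb : b = 0
  · simp [hb]
  rw [if_neg (mul_ne_zero ha hb), if_neg ha, if_neg hb, ← WithBot.coe_add,
    RatFunc.intDegree_mul ha hb]

lemma degBot_neg (a : RatFunc K) : degBot (-a) = degBot a := by
  unfold degBot
  by_cases ha : a = 0
  · simp [ha]
  · rw [if_neg (neg_ne_zero.2 ha), if_neg ha, RatFunc.intDegree_neg]

lemma degBot_add_le (a b : RatFunc K) : degBot (a + b) ≤ max (degBot a) (degBot b) := by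
  by_cases hab : a + b = 0
  · simp [degBot, hab]
  by_cases ha : a = 0
  · simp [ha]
  by_cases hb : b = 0
  · simp [hb]
  unfold degBot
  rw [if_neg hab, if_neg ha, if_neg hb]
  have h := RatFunc.intDegree_add_le hb hab
  have : ((max a.intDegree b.intDegree : ℤ) : WithBot ℤ)
      = max (a.intDegree : WithBot ℤ) (b.intDegree : WithBot ℤ) := by
    simp [WithBot.coe_max]
  rw [← this]
  exact_mod_cast h

lemma degBot_sum_le {ι : Type*} (s : Finset ι) (f : ι → RatFunc K) {c : WithBot ℤ}
    (h : ∀ i ∈ s, degBot (f i) ≤ c) : degBot (∑ i ∈ s, f i) ≤ c := by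
  classical
  induction s using Finset.induction_on with
  | empty => simp [degBot_zero]
  | insert _ _ hx ih =>
    rw [Finset.sum_insert hx]
    exact le_trans (degBot_add_le _ _)
      (max_le (h _ (Finset.mem_insert_self _ _))
        (ih fun i hi => h i (Finset.mem_insert_of_mem hi)))

lemma degBot_coeff_le (p : MvPolynomial (Fin m) (RatFunc K)) (α : Fin m →₀ ℕ) :
    degBot (MvPolynomial.coeff α p) ≤ degGauss p := by
  by_cases h : MvPolynomial.coeff α p = 0
  · rw [h, degBot_zero]; exact bot_le
  · exact Finset.le_sup (f := fun α => degBot (MvPolynomial.coeff α p))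
      (MvPolynomial.mem_support_iff.2 h)

lemma degGauss_le {p : MvPolynomial (Fin m) (RatFunc K)} {c : WithBot ℤ}
    (h : ∀ α, degBot (MvPolynomial.coeff α p) ≤ c) : degGauss p ≤ c :=
  Finset.sup_le fun α _ => h α

lemma degGauss_add_le (p q : MvPolynomial (Fin m) (RatFunc K)) :
    degGauss (p + q) ≤ max (degGauss p) (degGauss q) := by
  apply degGauss_le
  intro α
  rw [MvPolynomial.coeff_add]
  exact le_trans (degBot_add_le _ _)
    (max_le_max (degBot_coeff_le _ _) (degBot_coeff_le _ _))

lemma degGauss_mul_le (p q : MvPolynomial (Fin m) (RatFunc K)) :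
    degGauss (p * q) ≤ degGauss p + degGauss q := by
  apply degGauss_le
  intro α
  rw [MvPolynomial.coeff_mul]
  apply degBot_sum_le
  rintro ⟨β, γ⟩ _
  rw [degBot_mul]
  exact add_le_add (degBot_coeff_le _ _) (degBot_coeff_le _ _)

lemma degGauss_neg_le (p : MvPolynomial (Fin m) (RatFunc K)) :
    degGauss (-p) ≤ degGauss p := by
  apply degGauss_le
  intro α
  rw [MvPolynomial.coeff_neg, degBot_neg]
  exact degBot_coeff_le _ _

lemma degGauss_C_le (c : RatFunc K) :
    degGauss (MvPolynomial.C c : MvPolynomial (Fin m) (RatFunc K)) ≤ degBot c := by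
  apply degGauss_le
  intro α
  rw [MvPolynomial.coeff_C]
  split
  · exact le_refl _
  · simp [degBot_zero]

lemma degGauss_one_le : degGauss (1 : MvPolynomial (Fin m) (RatFunc K)) ≤ 0 := by
  have := degGauss_C_le (m := m) (1 : RatFunc K)
  rw [map_one, degBot_one] at this
  exact this

lemma degGauss_X_le (k : Fin m) :
    degGauss (MvPolynomial.X k : MvPolynomial (Fin m) (RatFunc K)) ≤ 0 := by
  apply degGauss_le
  intro α
  rw [MvPolynomial.coeff_X']
  split
  · rw [degBot_one]
  · simp [degBot_zero]

lemma degGauss_sum_le {ι : Type*} (s : Finset ι) (f : ι → MvPolynomial (Fin m) (RatFunc K))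
    {c : WithBot ℤ} (h : ∀ i ∈ s, degGauss (f i) ≤ c) :
    degGauss (∑ i ∈ s, f i) ≤ c := by
  apply degGauss_le
  intro α
  rw [MvPolynomial.coeff_sum]
  exact degBot_sum_le _ _ fun i hi => le_trans (degBot_coeff_le _ _) (h i hi)

lemma degGauss_prod_le_zero {ι : Type*} (s : Finset ι) (f : ι → MvPolynomial (Fin m) (RatFunc K))
    (h : ∀ i ∈ s, degGauss (f i) ≤ 0) : degGauss (∏ i ∈ s, f i) ≤ 0 := by
  classical
  induction s using Finset.induction_on with
  | empty => simpa using degGauss_one_le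
  | insert _ _ hx ih =>
    rw [Finset.prod_insert hx]
    calc degGauss _ ≤ _ := degGauss_mul_le _ _
      _ ≤ 0 + 0 := add_le_add (h _ (Finset.mem_insert_self _ _))
          (ih fun i hi => h i (Finset.mem_insert_of_mem hi))
      _ = 0 := add_zero 0

lemma degGauss_det_le {n : ℕ} (M : Matrix (Fin n) (Fin n) (MvPolynomial (Fin m) (RatFunc K)))
    (h : ∀ i j, degGauss (M i j) ≤ 0) : degGauss M.det ≤ 0 := by
  rw [Matrix.det_apply]
  apply degGauss_sum_le
  intro σ _
  have hprod : degGauss (∏ i, M (σ i) i) ≤ 0 :=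
    degGauss_prod_le_zero _ _ fun i _ => h _ _
  rcases Int.units_eq_one_or (Equiv.Perm.sign σ) with hs | hs <;>
    rw [hs, Units.smul_def]
  · simpa using hprod
  · simp only [Units.val_neg, Units.val_one, neg_smul, one_smul]
    exact le_trans (degGauss_neg_le _) hprod

end Aux

/-- Weak duality for the commutative weighted problem: for
`A = A₀ + A₁x₁ + ⋯ + A_m x_m` with `Aᵢ ∈ K(t)^{n×n}` and commuting variables `xᵢ`,
if `P, Q ∈ GL_n(K(t))` make every `P Aᵢ Q` proper, then
`deg det A ≤ − deg det P − deg det Q`. -/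
theorem weak_duality_commutative {K : Type*} [Field K] {n m : ℕ}
    (A0 : Matrix (Fin n) (Fin n) (RatFunc K))
    (A : Fin m → Matrix (Fin n) (Fin n) (RatFunc K))
    (P Q : Matrix (Fin n) (Fin n) (RatFunc K)) (hP : P.det ≠ 0) (hQ : Q.det ≠ 0)
    (hprop0 : ∀ i j, degBot ((P * A0 * Q) i j) ≤ 0)
    (hprop : ∀ k, ∀ i j, degBot ((P * A k * Q) i j) ≤ 0) :
    degGauss
        (Matrix.det (A0.map (fun a => (MvPolynomial.C a : MvPolynomial (Fin m) (RatFunc K))) +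
          ∑ k : Fin m, (MvPolynomial.X k : MvPolynomial (Fin m) (RatFunc K)) • (A k).map (fun a => (MvPolynomial.C a : MvPolynomial (Fin m) (RatFunc K))))) ≤
      ((- P.det.intDegree - Q.det.intDegree : ℤ) : WithBot ℤ) := by
  classical
  set C' : RatFunc K →+* MvPolynomial (Fin m) (RatFunc K) := MvPolynomial.C with hC'
  have hfun : (fun a : RatFunc K => (MvPolynomial.C a : MvPolynomial (Fin m) (RatFunc K)))
      = ⇑C' := rfl
  rw [hfun]
  set B : Matrix (Fin n) (Fin n) (MvPolynomial (Fin m) (RatFunc K)) :=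
    A0.map ⇑C' + ∑ k : Fin m, (MvPolynomial.X k : MvPolynomial (Fin m) (RatFunc K)) • (A k).map ⇑C'
    with hB
  -- key matrix identity
  have key : P.map ⇑C' * B * Q.map ⇑C'
      = (P * A0 * Q).map ⇑C' +
        ∑ k : Fin m, (MvPolynomial.X k : MvPolynomial (Fin m) (RatFunc K)) •
          ((P * A k * Q).map ⇑C') := by
    rw [hB]
    rw [Matrix.mul_add, Matrix.add_mul, Finset.mul_sum, Finset.sum_mul]
    congr 1
    · rw [← Matrix.map_mul, ← Matrix.map_mul]
    · apply Finset.sum_congr rfl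
      intro k _
      rw [Matrix.mul_smul, Matrix.smul_mul, ← Matrix.map_mul, ← Matrix.map_mul]
  -- entries of the transformed matrix are proper
  have hM : ∀ i j, degGauss ((P.map ⇑C' * B * Q.map ⇑C') i j) ≤ 0 := by
    intro i j
    rw [key, Matrix.add_apply, Matrix.sum_apply]
    refine le_trans (degGauss_add_le _ _) (max_le ?_ ?_)
    · rw [Matrix.map_apply]
      exact le_trans (degGauss_C_le _) (hprop0 i j)
    · apply degGauss_sum_le
      intro k _
      rw [Matrix.smul_apply, Matrix.map_apply, smul_eq_mul]
      calc degGauss _ ≤ _ := degGauss_mul_le _ _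
        _ ≤ 0 + 0 := add_le_add (degGauss_X_le k) (le_trans (degGauss_C_le _) (hprop k i j))
        _ = 0 := add_zero 0
  have hdet : degGauss ((P.map ⇑C' * B * Q.map ⇑C').det) ≤ 0 := degGauss_det_le _ hM
  have hdP : (P.map ⇑C').det = C' P.det := by
    rw [RingHom.map_det, RingHom.mapMatrix_apply]
  have hdQ : (Q.map ⇑C').det = C' Q.det := by
    rw [RingHom.map_det, RingHom.mapMatrix_apply]
  rw [Matrix.det_mul, Matrix.det_mul, hdP, hdQ] at hdet
  have hre : C' P.det * B.det * C' Q.det = MvPolynomial.C (P.det * Q.det) * B.det := by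
    rw [map_mul]
    ring
  rw [hre] at hdet
  -- extract coefficientwise bound
  have hPQ : P.det * Q.det ≠ 0 := mul_ne_zero hP hQ
  have hdPQ : degBot (P.det * Q.det) = ((P.det.intDegree + Q.det.intDegree : ℤ) : WithBot ℤ) := by
    unfold degBot
    rw [if_neg hPQ, RatFunc.intDegree_mul hP hQ]
  apply degGauss_le
  intro α
  have h1 : degBot (MvPolynomial.coeff α (MvPolynomial.C (P.det * Q.det) * B.det)) ≤ 0 :=
    le_trans (degBot_coeff_le _ _) hdet
  rw [MvPolynomial.coeff_C_mul, degBot_mul, hdPQ] at h1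
  rcases hx : degBot (MvPolynomial.coeff α B.det) with _ | z
  · exact bot_le
  · rw [hx, WithBot.some_eq_coe] at h1
    have h2 : P.det.intDegree + Q.det.intDegree + z ≤ 0 := by exact_mod_cast h1
    have h3 : z ≤ -P.det.intDegree - Q.det.intDegree := by omega
    rw [WithBot.some_eq_coe]
    exact_mod_cast h3
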